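/- Let C ⊆ F_q^n be a linear code with parity check matrix H having columns H_1,...,H_n, and for σ ⊆ {1,...,n} let η(σ) = |σ| - dim span{H_i : i ∈ σ}. If σ is minimal (with respect to inclusion) among subsets with η(σ) = i, then there exists an i-dimensional subcode D of C with minimal support among i-dimensional subcodes, such that supp(D) = σ. -/
import Mathlib

open Module Submodule

noncomputable section Stmt3Aux

variable {F : Type*} [Field F] {n m : ℕ}

/-- The syndrome map `x ↦ ∑ j, x j • H j`. -/
def stmt3φ (H : Fin n → (Fin m → F)) : (Fin n → F) →ₗ[F] (Fin m → F) where
  toFun x := ∑ j, x j • H j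
  map_add' x y := by simp [add_smul, Finset.sum_add_distrib]
  map_smul' c x := by simp [smul_smul, Finset.smul_sum]

open Classical in
/-- Extension by zero from `τ → F` to `Fin n → F`. -/
def stmt3ext (τ : Set (Fin n)) : (↥τ → F) →ₗ[F] (Fin n → F) where
  toFun y := fun j => if h : j ∈ τ then y ⟨j, h⟩ else 0
  map_add' x y := by funext j; by_cases h : j ∈ τ <;> simp [h]
  map_smul' c x := by funext j; by_cases h : j ∈ τ <;> simp [h]

/-- Functions supported inside `τ`. -/
def stmt3V (τ : Set (Fin n)) : Submodule F (Fin n → F) := LinearMap.range (stmt3ext τ)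

lemma stmt3_mem_V {τ : Set (Fin n)} {x : Fin n → F} :
    x ∈ stmt3V τ ↔ ∀ j ∉ τ, x j = 0 := by
  classical
  constructor
  · rintro ⟨y, rfl⟩ j hj; simp [stmt3ext, hj]
  · intro h
    refine ⟨fun j => x j, ?_⟩
    funext j
    by_cases hj : j ∈ τ <;> simp [stmt3ext, hj, h j]

lemma stmt3_V_mono {τ₁ τ₂ : Set (Fin n)} (h : τ₁ ⊆ τ₂) :
    stmt3V (F := F) τ₁ ≤ stmt3V τ₂ := by
  intro x hx
  rw [stmt3_mem_V] at hx ⊢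
  exact fun j hj => hx j (fun hj1 => hj (h hj1))

lemma stmt3_finrank_V (τ : Set (Fin n)) : finrank F (stmt3V (F := F) τ) = τ.ncard := by
  classical
  have hinj : Function.Injective (stmt3ext (F := F) τ) := by
    intro a b hab
    funext j
    have := congrFun hab j.val
    simpa [stmt3ext, j.prop] using this
  rw [stmt3V, LinearMap.finrank_range_of_inj hinj,
    Module.finrank_fintype_fun_eq_card, Set.ncard_eq_toFinset_card', Set.toFinset_card]

lemma stmt3_map_V (H : Fin n → (Fin m → F)) (τ : Set (Fin n)) :
    Submodule.map (stmt3φ H) (stmt3V τ) = Submodule.span F (H '' τ) := by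
  apply le_antisymm
  · rintro _ ⟨x, hx, rfl⟩
    rw [SetLike.mem_coe, stmt3_mem_V] at hx
    show (∑ j, x j • H j) ∈ _
    refine Submodule.sum_mem _ fun j _ => ?_
    by_cases hj : j ∈ τ
    · exact Submodule.smul_mem _ _ (Submodule.subset_span ⟨j, hj, rfl⟩)
    · simp [hx j hj]
  · rw [Submodule.span_le]
    rintro _ ⟨j, hj, rfl⟩
    refine ⟨Pi.single j 1, stmt3_mem_V.mpr ?_, ?_⟩
    · intro k hk
      exact Pi.single_eq_of_ne (by rintro rfl; exact hk hj) 1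
    · show (∑ k, Pi.single j 1 k • H k) = H j
      rw [Finset.sum_eq_single j]
      · simp
      · intro k _ hkj; simp [Pi.single_eq_of_ne hkj]
      · simp

set_option synthInstance.maxHeartbeats 400000 in
/-- Rank–nullity for the restricted code. -/
lemma stmt3_key (H : Fin n → (Fin m → F)) (τ : Set (Fin n)) :
    finrank F ↥(LinearMap.ker (stmt3φ H) ⊓ stmt3V τ)
      + finrank F (Submodule.span F (H '' τ)) = τ.ncard := by
  have h1 := LinearMap.finrank_range_add_finrank_ker ((stmt3φ H).domRestrict (stmt3V τ))
  rw [LinearMap.range_domRestrict, stmt3_map_V, LinearMap.ker_domRestrict,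
    stmt3_finrank_V] at h1
  have h0 : Submodule.comap (stmt3V (F := F) τ).subtype (LinearMap.ker (stmt3φ H))
      = Submodule.comap (stmt3V τ).subtype (LinearMap.ker (stmt3φ H) ⊓ stmt3V τ) := by
    rw [Submodule.comap_inf, Submodule.comap_subtype_self, inf_top_eq]
  have h2 : finrank F
        ↥(Submodule.comap (stmt3V (F := F) τ).subtype (LinearMap.ker (stmt3φ H) ⊓ stmt3V τ))
      = finrank F ↥(LinearMap.ker (stmt3φ H) ⊓ stmt3V τ) :=
    (Submodule.comapSubtypeEquivOfLe
      (inf_le_right : LinearMap.ker (stmt3φ H) ⊓ stmt3V τ ≤ stmt3V τ)).finrank_eq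
  rw [h0, h2] at h1
  omega

end Stmt3Aux

/-- If `σ` is minimal (w.r.t. inclusion) among subsets of nullity `i`,
where `η(τ) = |τ| - dim span{H j : j ∈ τ}`, then there is an `i`-dimensional subcode `D`
of `C = {x | ∑ j, x j • H j = 0}` with minimal support among `i`-dimensional subcodes,
such that `supp D = σ`. -/
theorem stmt_3 {F : Type*} [Field F] [Fintype F] {n m : ℕ}
    (H : Fin n → (Fin m → F)) (i : ℕ)
    (η : Set (Fin n) → ℕ)
    (hη : ∀ τ : Set (Fin n), η τ = τ.ncard -
      Module.finrank F (Submodule.span F (H '' τ)))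
    (supp : Submodule F (Fin n → F) → Set (Fin n))
    (hsupp : ∀ D, supp D = {j : Fin n | ∃ x ∈ D, x j ≠ 0})
    (σ : Set (Fin n)) (hσ : η σ = i)
    (hσmin : ∀ τ : Set (Fin n), τ ⊆ σ → η τ = i → τ = σ) :
    ∃ D : Submodule F (Fin n → F),
      (∀ x ∈ D, ∑ j, x j • H j = 0) ∧
      Module.finrank F D = i ∧
      (∀ D' : Submodule F (Fin n → F),
        (∀ x ∈ D', ∑ j, x j • H j = 0) → Module.finrank F D' = i →
        supp D' ⊆ supp D → supp D' = supp D) ∧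
      supp D = σ := by
  classical
  set D : Submodule F (Fin n → F) := LinearMap.ker (stmt3φ H) ⊓ stmt3V σ with hD
  have hdim : ∀ τ : Set (Fin n),
      finrank F ↥(LinearMap.ker (stmt3φ H) ⊓ stmt3V τ) = η τ := by
    intro τ
    have := stmt3_key H τ
    rw [hη τ]
    omega
  have hDdim : finrank F D = i := by rw [hD, hdim σ, hσ]
  have hDcode : ∀ x ∈ D, ∑ j, x j • H j = 0 := fun x hx => hx.1
  -- supp D ⊆ σ
  have hsub : supp D ⊆ σ := by
    intro j hj
    rw [hsupp] at hj
    obtain ⟨x, hxD, hxj⟩ := hj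
    by_contra hjσ
    exact hxj ((stmt3_mem_V.mp hxD.2) j hjσ)
  -- D equals the code restricted to its own support
  have hDeq : LinearMap.ker (stmt3φ H) ⊓ stmt3V (supp D) = D := by
    apply le_antisymm
    · exact le_inf inf_le_left (inf_le_right.trans (stmt3_V_mono hsub))
    · refine le_inf inf_le_left ?_
      intro x hx
      rw [stmt3_mem_V]
      intro j hj
      by_contra hxj
      exact hj ((hsupp D) ▸ ⟨x, hx, hxj⟩)
  have hsuppD : supp D = σ := by
    apply hσmin (supp D) hsub
    rw [← hdim (supp D), hDeq, hDdim]
  refine ⟨D, hDcode, hDdim, ?_, hsuppD⟩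
  intro D' hD'code hD'dim hD'sub
  have hle : D' ≤ D := by
    intro x hx
    refine ⟨?_, ?_⟩
    · show ∑ j, x j • H j = 0
      exact hD'code x hx
    · rw [SetLike.mem_coe, stmt3_mem_V]
      intro j hj
      by_contra hxj
      exact hj (hsuppD ▸ hD'sub ((hsupp D') ▸ ⟨x, hx, hxj⟩))
  have : D' = D := Submodule.eq_of_le_of_finrank_eq hle (by rw [hDdim, hD'dim])
  rw [this]
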